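/- arXiv:2411.13806 — 5 statements merged into one kernel-verified Lean document; each statement's English description precedes it below -/
import Mathlib

section
/- Let L be a Laplacian with k-dimensional kernel spanned by vectors w_1,…,w_k of the canonical form (nonnegative first block β_i, all-ones in the (i+1)-st block, zero elsewhere). For each i, let S_i be the support of w_i and L_{S_i} the principal submatrix of L indexed by S_i. Then rank(L_{S_i}) = |S_i| - 1. -/
open Matrix

/-- For a Laplacian `L` in canonical block form with `k` basic bicomponents,
the principal submatrix indexed by the support `Sᵢ` of the `i`-th canonical
kernel vector `wᵢ` has rank `|Sᵢ| - 1`. -/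
theorem stmt_10 {M0 k : ℕ} {M : Fin k → ℕ}
    (L0 : Matrix (Fin M0) (Fin M0) ℝ) (hL0 : IsUnit L0.det)
    (L0i : ∀ i : Fin k, Matrix (Fin M0) (Fin (M i)) ℝ)
    (Lblk : ∀ i : Fin k, Matrix (Fin (M i)) (Fin (M i)) ℝ)
    (hLblk : ∀ i, LinearMap.ker (Matrix.toLin' (Lblk i)) =
      Submodule.span ℝ {(fun _ => 1 : Fin (M i) → ℝ)})
    (L : Matrix (Fin M0 ⊕ (Σ i : Fin k, Fin (M i)))
                (Fin M0 ⊕ (Σ i : Fin k, Fin (M i))) ℝ)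
    (hoff : ∀ a b, a ≠ b → L a b ≤ 0)
    (hrowsum : ∀ a, ∑ b, L a b = 0)
    (h11 : ∀ a b, L (Sum.inl a) (Sum.inl b) = L0 a b)
    (h12 : ∀ a i b, L (Sum.inl a) (Sum.inr ⟨i, b⟩) = L0i i a b)
    (h21 : ∀ i a b, L (Sum.inr ⟨i, a⟩) (Sum.inl b) = 0)
    (h22 : ∀ i a j b, L (Sum.inr ⟨i, a⟩) (Sum.inr ⟨j, b⟩) =
      if h : i = j then Lblk i a (h ▸ b) else 0)
    (i : Fin k)
    (w : (Fin M0 ⊕ (Σ j : Fin k, Fin (M j))) → ℝ)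
    (hw : w = Sum.elim ((-(L0⁻¹ * L0i i)).mulVec (fun _ => 1))
      (fun q => if q.1 = i then (1 : ℝ) else 0))
    (hwpos : ∀ a, 0 ≤ w a) :
    (L.submatrix (Subtype.val : {v // 0 < w v} → _)
        (Subtype.val : {v // 0 < w v} → _)).rank
      = Fintype.card {v // 0 < w v} - 1 := by
  classical
  have hw1 : ∀ a, w (Sum.inl a) = (-(L0⁻¹ * L0i i)).mulVec (fun _ => (1:ℝ)) a :=
    fun a => by rw [hw]; rfl
  have hw2 : ∀ (j : Fin k) (b : Fin (M j)),
      w (Sum.inr ⟨j, b⟩) = if j = i then (1:ℝ) else 0 := fun j b => by rw [hw]; rfl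
  have hwzero : ∀ u, ¬ 0 < w u → w u = 0 :=
    fun u h => le_antisymm (not_lt.mp h) (hwpos u)
  -- each block kernel contains the all-ones vector
  have hone : ∀ j : Fin k, (Lblk j).mulVec (fun _ => (1:ℝ)) = 0 := by
    intro j
    have h : (fun _ => (1:ℝ)) ∈ LinearMap.ker (Matrix.toLin' (Lblk j)) := by
      rw [hLblk j]; exact Submodule.mem_span_singleton_self _
    rw [LinearMap.mem_ker, Matrix.toLin'_apply] at h
    exact h
  -- the top part of w
  have hβ : L0.mulVec (fun a => w (Sum.inl a))
      = -((L0i i).mulVec (fun _ => (1:ℝ))) := by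
    have h1 : (fun a => w (Sum.inl a))
        = (-(L0⁻¹ * L0i i)).mulVec (fun _ => (1:ℝ)) := funext hw1
    rw [h1, Matrix.mulVec_mulVec, Matrix.mul_neg,
      Matrix.mul_nonsing_inv_cancel_left _ _ hL0, Matrix.neg_mulVec]
  have hsig : ∀ f : (Σ j : Fin k, Fin (M j)) → ℝ,
      ∑ p : Σ j : Fin k, Fin (M j), f p = ∑ j, ∑ b, f ⟨j, b⟩ := by
    intro f
    rw [← Finset.univ_sigma_univ, Finset.sum_sigma]
  -- row expansion for bottom rows
  have hbot : ∀ (j : Fin k) (a : Fin (M j)) (x : (Fin M0 ⊕ (Σ j, Fin (M j))) → ℝ),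
      ∑ u, L (Sum.inr ⟨j, a⟩) u * x u
        = ∑ b, Lblk j a b * x (Sum.inr ⟨j, b⟩) := by
    intro j a x
    rw [Fintype.sum_sum_type]
    have h1 : ∑ b, L (Sum.inr ⟨j, a⟩) (Sum.inl b) * x (Sum.inl b) = 0 := by
      simp [h21]
    rw [h1, zero_add]
    have h2 : ∀ p : Σ j', Fin (M j'),
        L (Sum.inr ⟨j, a⟩) (Sum.inr p) * x (Sum.inr p)
          = if hp : p.1 = j then Lblk j a (hp ▸ p.2) * x (Sum.inr p) else 0 := by
      rintro ⟨j', b⟩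
      rcases eq_or_ne j' j with rfl | hne
      · simp only [dif_pos rfl]
        rw [h22]
        simp
      · rw [h22]
        rw [dif_neg (Ne.symm hne), dif_neg hne, zero_mul]
    calc ∑ p : Σ j', Fin (M j'), L (Sum.inr ⟨j, a⟩) (Sum.inr p) * x (Sum.inr p)
        = ∑ p : Σ j', Fin (M j'),
            if hp : p.1 = j then Lblk j a (hp ▸ p.2) * x (Sum.inr p) else 0 := by
          exact Finset.sum_congr rfl (fun p _ => h2 p)
      _ = ∑ b, Lblk j a b * x (Sum.inr ⟨j, b⟩) := by
          rw [hsig (fun p => if hp : p.1 = j then Lblk j a (hp ▸ p.2) * x (Sum.inr p) else 0)]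
          rw [Finset.sum_eq_single j]
          · apply Finset.sum_congr rfl
            intro b _
            simp
          · intro j' _ hne
            apply Finset.sum_eq_zero
            intro b _
            exact dif_neg hne
          · intro h; exact absurd (Finset.mem_univ j) h
  -- row expansion for top rows, when x vanishes on blocks other than i
  have htop : ∀ (a : Fin M0) (x : (Fin M0 ⊕ (Σ j, Fin (M j))) → ℝ),
      (∀ j b, j ≠ i → x (Sum.inr ⟨j, b⟩) = 0) →
      ∑ u, L (Sum.inl a) u * x u
        = (L0.mulVec (fun c => x (Sum.inl c))) a
          + ((L0i i).mulVec (fun b => x (Sum.inr ⟨i, b⟩))) a := by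
    intro a x hx
    rw [Fintype.sum_sum_type]
    congr 1
    · simp [Matrix.mulVec, dotProduct, h11]
    · rw [hsig (fun p => L (Sum.inl a) (Sum.inr p) * x (Sum.inr p))]
      rw [Finset.sum_eq_single i]
      · simp [Matrix.mulVec, dotProduct, h12]
      · intro j' _ hne
        apply Finset.sum_eq_zero
        intro b _
        rw [hx j' b hne, mul_zero]
      · intro h; exact absurd (Finset.mem_univ i) h
  -- w is in the kernel of L
  have hLw : ∀ v, ∑ u, L v u * w u = 0 := by
    rintro (a | ⟨j, b⟩)
    · rw [htop a w (fun j b hne => by rw [hw2]; exact if_neg hne)]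
      have : (fun b => w (Sum.inr ⟨i, b⟩)) = (fun _ => (1:ℝ)) := by
        funext b; rw [hw2, if_pos rfl]
      rw [this, hβ]
      simp
    · rw [hbot j b w]
      rcases eq_or_ne j i with rfl | hne
      · have h0 := congrFun (hone j) b
        simp only [Matrix.mulVec, dotProduct, mul_one, Pi.zero_apply] at h0
        calc ∑ b', Lblk j b b' * w (Sum.inr ⟨j, b'⟩)
            = ∑ b', Lblk j b b' := by
              apply Finset.sum_congr rfl
              intro b' _
              rw [hw2, if_pos rfl, mul_one]
          _ = 0 := h0
      · apply Finset.sum_eq_zero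
        intro b' _
        rw [hw2, if_neg hne, mul_zero]
  -- off-support rows annihilate the support
  have hLzero : ∀ v u, ¬ 0 < w v → 0 < w u → L v u = 0 := by
    intro v u hv hu
    have hterm : ∀ t ∈ Finset.univ, L v t * w t ≤ 0 := by
      intro t _
      rcases eq_or_ne v t with rfl | hne
      · rw [hwzero v hv, mul_zero]
      · exact mul_nonpos_of_nonpos_of_nonneg (hoff v t hne) (hwpos t)
    have h0 := (Finset.sum_eq_zero_iff_of_nonpos hterm).mp (hLw v) u (Finset.mem_univ u)
    rcases mul_eq_zero.mp h0 with h | h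
    · exact h
    · exact absurd h (ne_of_gt hu)
  -- summation over the support
  have hsum : ∀ (v : Fin M0 ⊕ (Σ j, Fin (M j))) (x : (Fin M0 ⊕ (Σ j, Fin (M j))) → ℝ),
      (∀ u, ¬ 0 < w u → x u = 0) →
      ∑ u : {v // 0 < w v}, L v u.1 * x u.1 = ∑ u, L v u * x u := by
    intro v x hx
    rw [← Finset.sum_subtype (Finset.univ.filter (fun u => 0 < w u))
      (by simp) (fun u => L v u * x u)]
    apply Finset.sum_filter_of_ne
    intro u _ hu
    by_contra hwu
    exact hu (by rw [hx u hwu, mul_zero])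
  set A := L.submatrix (Subtype.val : {v // 0 < w v} → _)
      (Subtype.val : {v // 0 < w v} → _) with hA
  by_cases hS : Nonempty {v // 0 < w v}
  · -- restricted w
    set ws : {v // 0 < w v} → ℝ := fun u => w u.1 with hws
    have hwsne : ws ≠ 0 := by
      obtain ⟨v0⟩ := hS
      intro h
      have := congrFun h v0
      exact absurd this.symm (ne_of_lt v0.2)
    -- the kernel of A is spanned by ws
    have hker : LinearMap.ker A.mulVecLin = Submodule.span ℝ {ws} := by
      apply le_antisymm
      · intro x hx
        rw [LinearMap.mem_ker, Matrix.mulVecLin_apply] at hx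
        set xt : (Fin M0 ⊕ (Σ j, Fin (M j))) → ℝ :=
          fun v => if h : 0 < w v then x ⟨v, h⟩ else 0 with hxt
        have hxt0 : ∀ u, ¬ 0 < w u → xt u = 0 := by
          intro u h; simp [hxt, h]
        have hxtS : ∀ (u) (h : 0 < w u), xt u = x ⟨u, h⟩ := by
          intro u h; simp [hxt, h]
        have hAx : ∀ v, ∑ u, L v u * xt u = 0 := by
          intro v
          rw [← hsum v xt hxt0]
          by_cases hv : 0 < w v
          · have h0 : (A.mulVec x) ⟨v, hv⟩ = 0 := by rw [hx]; rfl
            rw [Matrix.mulVec, dotProduct] at h0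
            refine Eq.trans ?_ h0
            apply Finset.sum_congr rfl
            intro u _
            rw [hxtS u.1 u.2]
            simp [hA]
          · apply Finset.sum_eq_zero
            intro u _
            rw [hLzero v u.1 hv u.2, zero_mul]
        -- block i of xt is constant
        have hmem : (fun b => xt (Sum.inr ⟨i, b⟩))
            ∈ LinearMap.ker (Matrix.toLin' (Lblk i)) := by
          rw [LinearMap.mem_ker, Matrix.toLin'_apply]
          funext a
          have := hAx (Sum.inr ⟨i, a⟩)
          rw [hbot i a xt] at this
          simpa [Matrix.mulVec, dotProduct] using this
        rw [hLblk i] at hmem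
        obtain ⟨c, hc⟩ := Submodule.mem_span_singleton.mp hmem
        -- xt vanishes on other blocks
        have hxtj : ∀ j b, j ≠ i → xt (Sum.inr ⟨j, b⟩) = 0 := by
          intro j b hne
          apply hxt0
          rw [hw2, if_neg hne]
          simp
        -- top part of xt equals c • (top part of w)
        have htopx : (fun a => xt (Sum.inl a)) = fun a => c * w (Sum.inl a) := by
          have hinj : Function.Injective L0.mulVec := by
            intro p q hpq
            have := congrArg (L0⁻¹.mulVec) hpq
            rwa [Matrix.mulVec_mulVec, Matrix.mulVec_mulVec,
              Matrix.nonsing_inv_mul _ hL0, Matrix.one_mulVec, Matrix.one_mulVec] at this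
          apply hinj
          have heq : ∀ a, (L0.mulVec (fun c => xt (Sum.inl c))) a
              = -((L0i i).mulVec (fun b => xt (Sum.inr ⟨i, b⟩))) a := by
            intro a
            have := hAx (Sum.inl a)
            rw [htop a xt hxtj] at this
            linarith
          have h2 : (fun b => xt (Sum.inr ⟨i, b⟩)) = c • (fun _ => (1:ℝ)) := hc.symm
          funext a
          rw [heq a, h2]
          have h3 : (L0i i).mulVec (c • (fun _ => (1:ℝ)))
              = c • ((L0i i).mulVec (fun _ => (1:ℝ))) := Matrix.mulVec_smul _ _ _
          rw [h3]
          have h4 : L0.mulVec (fun a => c * w (Sum.inl a))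
              = c • L0.mulVec (fun a => w (Sum.inl a)) := by
            have : (fun a => c * w (Sum.inl a)) = c • (fun a => w (Sum.inl a)) := rfl
            rw [this, Matrix.mulVec_smul]
          rw [h4, hβ]
          simp
        -- xt = c • w
        have hxtw : ∀ v, xt v = c * w v := by
          rintro (a | ⟨j, b⟩)
          · exact congrFun htopx a
          · rcases eq_or_ne j i with rfl | hne
            · have := congrFun hc b
              simp only [Pi.smul_apply, smul_eq_mul, mul_one] at this
              rw [← this, hw2, if_pos rfl, mul_one]
            · rw [hxtj j b hne, hw2, if_neg hne, mul_zero]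
        rw [Submodule.mem_span_singleton]
        refine ⟨c, ?_⟩
        funext u
        rw [Pi.smul_apply, hws, smul_eq_mul, ← hxtw u.1, hxtS u.1 u.2]
      · rw [Submodule.span_le, Set.singleton_subset_iff]
        rw [SetLike.mem_coe, LinearMap.mem_ker, Matrix.mulVecLin_apply]
        funext v
        simp only [Pi.zero_apply]
        rw [Matrix.mulVec, dotProduct]
        have heq : ∑ u : {v // 0 < w v}, A v u * ws u
            = ∑ u : {v // 0 < w v}, L v.1 u.1 * w u.1 := rfl
        rw [heq, hsum v.1 w (fun u h => hwzero u h), hLw v.1]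
    -- rank-nullity
    have hrn := LinearMap.finrank_range_add_finrank_ker A.mulVecLin
    rw [hker, finrank_span_singleton hwsne,
      Module.finrank_fintype_fun_eq_card] at hrn
    have hrank : A.rank = Module.finrank ℝ (LinearMap.range A.mulVecLin) := rfl
    omega
  · have hcard : Fintype.card {v // 0 < w v} = 0 :=
      Fintype.card_eq_zero_iff.mpr (not_nonempty_iff.mp hS)
    have hle := Matrix.rank_le_card_width A
    rw [hcard] at hle
    omega
end

section
/- Let L ∈ ℝ^{N×N} be a Laplacian with canonical kernel vectors w_1,…,w_k as above, and define B ∈ ℝ^{M_0×N'} (N' = Σ_{i=1}^k M_i) blockwise by B having (j,i)-block β_{j,i} M_i^{-1} 𝟏_{M_i}^T. Then ker L ⊆ ker(-I_{M_0} | B), and consequently there exists a matrix V with VL = (-I_{M_0} | B). -/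
open Matrix

lemma exists_comp_eq_of_ker_le {α β γ : Type*} [AddCommGroup α] [AddCommGroup β] [AddCommGroup γ]
    [Module ℝ α] [Module ℝ β] [Module ℝ γ]
    (f : α →ₗ[ℝ] β) (g : α →ₗ[ℝ] γ) (h : LinearMap.ker f ≤ LinearMap.ker g) :
    ∃ V : β →ₗ[ℝ] γ, V ∘ₗ f = g := by
  obtain ⟨V, hV⟩ := LinearMap.exists_extend
    (((LinearMap.ker f).liftQ g h) ∘ₗ (f.quotKerEquivRange.symm :
      LinearMap.range f →ₗ[ℝ] α ⧸ LinearMap.ker f))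
  refine ⟨V, ?_⟩
  ext x
  have h1 : f.quotKerEquivRange (Submodule.Quotient.mk x) =
      ⟨f x, LinearMap.mem_range_self f x⟩ :=
    Subtype.ext (f.quotKerEquivRange_apply_mk x)
  have h2 := DFunLike.congr_fun hV ⟨f x, LinearMap.mem_range_self f x⟩
  simp only [LinearMap.comp_apply, Submodule.subtype_apply, LinearEquiv.coe_coe] at h2 ⊢
  rw [h2, ← h1, LinearEquiv.symm_apply_apply]
  simp

/-- With `L` in canonical block form and `B` the `M₀ × (∑ Mᵢ)` matrix whose
`(j,i)`-block is `β_{j,i} Mᵢ⁻¹ 𝟏ᵀ`, we have `ker L ⊆ ker(-I | B)` and hence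
there exists `V` with `V L = (-I | B)`. -/
theorem stmt_12 {M0 k : ℕ} {M : Fin k → ℕ}
    (L0 : Matrix (Fin M0) (Fin M0) ℝ) (hL0 : IsUnit L0.det)
    (L0i : ∀ i : Fin k, Matrix (Fin M0) (Fin (M i)) ℝ)
    (Lblk : ∀ i : Fin k, Matrix (Fin (M i)) (Fin (M i)) ℝ)
    (hLblk : ∀ i, LinearMap.ker (Matrix.toLin' (Lblk i)) =
      Submodule.span ℝ {(fun _ => 1 : Fin (M i) → ℝ)})
    (L : Matrix (Fin M0 ⊕ (Σ i : Fin k, Fin (M i)))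
                (Fin M0 ⊕ (Σ i : Fin k, Fin (M i))) ℝ)
    (h11 : ∀ a b, L (Sum.inl a) (Sum.inl b) = L0 a b)
    (h12 : ∀ a i b, L (Sum.inl a) (Sum.inr ⟨i, b⟩) = L0i i a b)
    (h21 : ∀ i a b, L (Sum.inr ⟨i, a⟩) (Sum.inl b) = 0)
    (h22 : ∀ i a j b, L (Sum.inr ⟨i, a⟩) (Sum.inr ⟨j, b⟩) =
      if h : i = j then Lblk i a (h ▸ b) else 0)
    (Bfull : Matrix (Fin M0) (Fin M0 ⊕ (Σ i : Fin k, Fin (M i))) ℝ)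
    (hB1 : ∀ j a, Bfull j (Sum.inl a) = if a = j then (-1 : ℝ) else 0)
    (hB2 : ∀ j i b, Bfull j (Sum.inr ⟨i, b⟩) =
      ((-(L0⁻¹ * L0i i)).mulVec (fun _ => 1) j) / (M i : ℝ)) :
    LinearMap.ker (Matrix.toLin' L) ≤ LinearMap.ker (Matrix.toLin' Bfull) ∧
    ∃ V : Matrix (Fin M0) (Fin M0 ⊕ (Σ i : Fin k, Fin (M i))) ℝ,
      V * L = Bfull := by
  have hker : LinearMap.ker (Matrix.toLin' L) ≤ LinearMap.ker (Matrix.toLin' Bfull) := by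
    intro x hx
    rw [LinearMap.mem_ker, Matrix.toLin'_apply] at hx
    have hLx : ∀ r, ∑ c, L r c * x c = 0 := by
      intro r
      have := congrFun hx r
      simpa [Matrix.mulVec, dotProduct] using this
    -- each block: xi ∈ ker (Lblk i)
    have hblk : ∀ i : Fin k, ∃ c : ℝ,
        (fun b => x (Sum.inr ⟨i, b⟩)) = c • (fun _ => 1 : Fin (M i) → ℝ) := by
      intro i
      have hmem : (fun b => x (Sum.inr ⟨i, b⟩)) ∈
          LinearMap.ker (Matrix.toLin' (Lblk i)) := by
        rw [LinearMap.mem_ker, Matrix.toLin'_apply]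
        funext a
        have h0 := hLx (Sum.inr ⟨i, a⟩)
        rw [Fintype.sum_sum_type] at h0
        have e1 : ∑ b : Fin M0, L (Sum.inr ⟨i, a⟩) (Sum.inl b) * x (Sum.inl b) = 0 := by
          simp [h21]
        rw [e1, zero_add, ← Finset.univ_sigma_univ, Finset.sum_sigma] at h0
        have e2 : ∀ j : Fin k, j ≠ i →
            ∑ b : Fin (M j), L (Sum.inr ⟨i, a⟩) (Sum.inr ⟨j, b⟩) * x (Sum.inr ⟨j, b⟩) = 0 := by
          intro j hj
          apply Finset.sum_eq_zero
          intro b _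
          rw [h22 i a j b, dif_neg (Ne.symm hj), zero_mul]
        rw [Finset.sum_eq_single i (fun j _ hj => e2 j hj) (by simp)] at h0
        have e3 : ∀ b : Fin (M i), L (Sum.inr ⟨i, a⟩) (Sum.inr ⟨i, b⟩) = Lblk i a b := by
          intro b; rw [h22]; simp
        simp only [e3] at h0
        simpa [Matrix.mulVec, dotProduct] using h0
      rw [hLblk i] at hmem
      obtain ⟨c, hc⟩ := Submodule.mem_span_singleton.1 hmem
      exact ⟨c, hc.symm⟩
    choose c hc using hblk
    have hcx : ∀ i (b : Fin (M i)), x (Sum.inr ⟨i, b⟩) = c i := by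
      intro i b
      have := congrFun (hc i) b
      simpa using this
    set v : ∀ i : Fin k, Fin M0 → ℝ := fun i => (-(L0⁻¹ * L0i i)).mulVec (fun _ => 1) with hv
    -- x0 in terms of c and v
    have hx0 : ∀ j, x (Sum.inl j) = ∑ i, c i * v i j := by
      have hrow : L0.mulVec (fun b => x (Sum.inl b)) =
          fun a => -∑ i, c i * ((L0i i).mulVec (fun _ => 1) a) := by
        funext a
        have h0 := hLx (Sum.inl a)
        rw [Fintype.sum_sum_type, ← Finset.univ_sigma_univ, Finset.sum_sigma] at h0
        have e1 : ∀ i : Fin k, ∑ b : Fin (M i),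
            L (Sum.inl a) (Sum.inr ⟨i, b⟩) * x (Sum.inr ⟨i, b⟩)
            = c i * ((L0i i).mulVec (fun _ => 1) a) := by
          intro i
          simp only [h12, hcx]
          rw [Matrix.mulVec, dotProduct]
          rw [Finset.mul_sum]
          exact Finset.sum_congr rfl (fun b _ => by ring)
        simp only [e1, h11] at h0
        have : L0.mulVec (fun b => x (Sum.inl b)) a = ∑ b, L0 a b * x (Sum.inl b) := by
          simp [Matrix.mulVec, dotProduct]
        rw [this]
        linarith [h0]
      have key : (fun b => x (Sum.inl b)) =
          L0⁻¹.mulVec (L0.mulVec (fun b => x (Sum.inl b))) := by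
        rw [Matrix.mulVec_mulVec, Matrix.nonsing_inv_mul L0 hL0, Matrix.one_mulVec]
      have hvec : L0⁻¹.mulVec (fun a => -∑ i, c i * ((L0i i).mulVec (fun _ => 1) a)) =
          ∑ i, c i • ((-(L0⁻¹ * L0i i)).mulVec (fun _ => 1)) := by
        have expand : (fun a => -∑ i, c i * ((L0i i).mulVec (fun _ => 1) a)) =
            ∑ i, c i • (-((L0i i).mulVec (fun _ => 1))) := by
          funext a
          simp only [Finset.sum_apply, Pi.smul_apply, Pi.neg_apply, smul_eq_mul, mul_neg]
          rw [Finset.sum_neg_distrib]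
        rw [expand, ← Matrix.mulVecLin_apply, map_sum]
        refine Finset.sum_congr rfl (fun i _ => ?_)
        rw [_root_.map_smul, map_neg, Matrix.mulVecLin_apply, Matrix.mulVec_mulVec,
          ← Matrix.neg_mulVec]
      intro j
      rw [congrFun key j, hrow, hvec]
      simp [Finset.sum_apply, hv]
    -- now show Bfull *ᵥ x = 0
    rw [LinearMap.mem_ker, Matrix.toLin'_apply]
    funext j
    show (Bfull.mulVec x) j = 0
    rw [Matrix.mulVec, dotProduct, Fintype.sum_sum_type,
      ← Finset.univ_sigma_univ, Finset.sum_sigma]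
    have e1 : ∑ a : Fin M0, Bfull j (Sum.inl a) * x (Sum.inl a) = -x (Sum.inl j) := by
      simp only [hB1, ite_mul, neg_mul, one_mul, zero_mul]
      rw [Finset.sum_ite_eq' Finset.univ j (fun a => -x (Sum.inl a))]
      simp
    have e2 : ∀ i : Fin k, ∑ b : Fin (M i),
        Bfull j (Sum.inr ⟨i, b⟩) * x (Sum.inr ⟨i, b⟩) = c i * v i j := by
      intro i
      simp only [hB2, hcx]
      rw [Finset.sum_const, Finset.card_univ, Fintype.card_fin]
      by_cases hMi : M i = 0
      · haveI : IsEmpty (Fin (M i)) := by rw [hMi]; infer_instance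
        have hvz : v i j = 0 := by
          simp [hv, Matrix.mulVec, dotProduct, Finset.univ_eq_empty]
        simp [hMi, hvz]
      · have hM : (M i : ℝ) ≠ 0 := Nat.cast_ne_zero.2 hMi
        rw [nsmul_eq_mul]
        have hvv : (-(L0⁻¹ * L0i i) *ᵥ fun _ => (1:ℝ)) j = v i j := rfl
        rw [hvv]
        field_simp
    rw [e1, Finset.sum_congr rfl (fun i _ => e2 i), hx0 j]
    ring
  refine ⟨hker, ?_⟩
  obtain ⟨Vl, hVl⟩ := exists_comp_eq_of_ker_le (Matrix.toLin' L) (Matrix.toLin' Bfull) hker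
  refine ⟨LinearMap.toMatrix' Vl, ?_⟩
  have := congrArg LinearMap.toMatrix' hVl
  rwa [LinearMap.toMatrix'_comp, LinearMap.toMatrix'_toLin', LinearMap.toMatrix'_toLin'] at this
end

section
/- Let L be the Laplacian of a directed graph without a directed spanning tree, so L has k ≥ 2 basic bicomponents. Suppose trajectories y_j : ℝ≥0 → ℝ^p satisfy (L ⊗ I_p) y(t) → 0, and within each basic bicomponent i the outputs converge to a common trajectory y^i_s. Then every agent j not in any basic bicomponent satisfies y_j(t) - Σ_{i=1}^k β_{j,i} y^i_s(t) → 0 as t → ∞, where the coefficients β_{j,i} ≥ 0 sum to 1 over i and depend only on L. -/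
open Filter Matrix
open scoped NNReal Topology

/-- Maximum principle: strictly row-dominant Z-matrix has nonnegative inverse. -/
lemma inv_entry_nonneg_strict {n : ℕ} (B : Matrix (Fin n) (Fin n) ℝ)
    (hdet : IsUnit B.det)
    (hoffB : ∀ a b, a ≠ b → B a b ≤ 0)
    (hrowB : ∀ a, 0 < ∑ b, B a b) :
    ∀ i j, 0 ≤ B⁻¹ i j := by
  intro i j
  by_contra hneg
  push_neg at hneg
  set v : Fin n → ℝ := fun a => B⁻¹ a j with hv
  obtain ⟨m, -, hm⟩ := Finset.exists_min_image Finset.univ v ⟨i, Finset.mem_univ i⟩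
  have hmneg : v m < 0 := lt_of_le_of_lt (hm i (Finset.mem_univ i)) hneg
  have hBv : (0:ℝ) ≤ ∑ b, B m b * v b := by
    have : ∑ b, B m b * v b = (B * B⁻¹) m j := by
      simp [Matrix.mul_apply, hv]
    rw [this, Matrix.mul_nonsing_inv B hdet]
    by_cases h : m = j <;> simp [Matrix.one_apply, h]
  have hterm : ∀ b, B m b * v b ≤ B m b * v m := by
    intro b
    by_cases hbm : b = m
    · subst hbm; exact le_refl _
    · exact mul_le_mul_of_nonpos_left (hm b (Finset.mem_univ b)) (hoffB m b (Ne.symm hbm))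
  have h1 : ∑ b, B m b * v b ≤ (∑ b, B m b) * v m := by
    rw [Finset.sum_mul]
    exact Finset.sum_le_sum fun b _ => hterm b
  have h2 : (∑ b, B m b) * v m < 0 := mul_neg_of_pos_of_neg (hrowB m) hmneg
  linarith

/-- Z-matrix with nonnegative row sums and nonzero determinant has nonneg inverse. -/
lemma inv_entry_nonneg {n : ℕ} (A : Matrix (Fin n) (Fin n) ℝ)
    (hdet : IsUnit A.det)
    (hoffA : ∀ a b, a ≠ b → A a b ≤ 0)
    (hrowA : ∀ a, 0 ≤ ∑ b, A a b) :
    ∀ i j, 0 ≤ A⁻¹ i j := by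
  intro i j
  have hdet0 : A.det ≠ 0 := hdet.ne_zero
  set f : ℝ → Matrix (Fin n) (Fin n) ℝ := fun ε => A + ε • (1 : Matrix (Fin n) (Fin n) ℝ) with hf
  have hfc : Continuous f := continuous_const.add (continuous_id.smul continuous_const)
  have hf0 : f 0 = A := by simp [hf]
  set g : ℝ → ℝ := fun ε => ((f ε).det)⁻¹ * (f ε).adjugate i j with hg
  have hg0 : g 0 = A⁻¹ i j := by
    rw [hg]; simp only [hf0]
    rw [Matrix.inv_def]
    simp [Matrix.smul_apply, smul_eq_mul]
  -- entry facts about f ε for ε > 0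
  have hfoff : ∀ ε : ℝ, ∀ a b, a ≠ b → f ε a b = A a b := by
    intro ε a b hab
    simp [hf, Matrix.add_apply, Matrix.smul_apply, Matrix.one_apply_ne hab]
  have hfdiag : ∀ ε : ℝ, ∀ a, f ε a a = A a a + ε := by
    intro ε a
    simp [hf, Matrix.add_apply, Matrix.smul_apply, Matrix.one_apply_eq]
  have hfrow : ∀ ε : ℝ, ∀ a, ∑ b, f ε a b = (∑ b, A a b) + ε := by
    intro ε a
    simp [hf, Matrix.add_apply, Matrix.smul_apply, Finset.sum_add_distrib,
      Matrix.one_apply, Finset.sum_ite_eq, smul_eq_mul, mul_ite]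
  -- diag of A nonneg and dominance
  have hdom : ∀ a, ∑ b ∈ Finset.univ.erase a, |A a b| ≤ A a a := by
    intro a
    have h1 : ∑ b ∈ Finset.univ.erase a, |A a b| = ∑ b ∈ Finset.univ.erase a, -A a b := by
      refine Finset.sum_congr rfl fun b hb => abs_of_nonpos (hoffA a b ?_)
      exact Ne.symm (Finset.mem_erase.mp hb).1
    rw [h1]
    have h2 := hrowA a
    rw [← Finset.add_sum_erase _ _ (Finset.mem_univ a)] at h2
    simp only [Finset.sum_neg_distrib]
    linarith
  have hdetε : ∀ ε : ℝ, 0 < ε → (f ε).det ≠ 0 := by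
    intro ε hε
    apply det_ne_zero_of_sum_row_lt_diag
    intro a
    have h1 : ∑ b ∈ Finset.univ.erase a, ‖f ε a b‖ = ∑ b ∈ Finset.univ.erase a, |A a b| := by
      refine Finset.sum_congr rfl fun b hb => ?_
      rw [hfoff ε a b (fun h => (Finset.mem_erase.mp hb).1 h.symm)]
      rfl
    have h2 : (0:ℝ) ≤ A a a := le_trans (Finset.sum_nonneg fun b _ => abs_nonneg _) (hdom a)
    rw [h1, hfdiag]
    rw [Real.norm_eq_abs, abs_of_nonneg (by linarith)]
    calc ∑ b ∈ Finset.univ.erase a, |A a b| ≤ A a a := hdom a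
      _ < A a a + ε := by linarith
  have hεnonneg : ∀ ε : ℝ, 0 < ε → 0 ≤ g ε := by
    intro ε hε
    have hu : IsUnit (f ε).det := isUnit_iff_ne_zero.mpr (hdetε ε hε)
    have := inv_entry_nonneg_strict (f ε) hu
      (fun a b hab => (hfoff ε a b hab) ▸ hoffA a b hab)
      (fun a => by rw [hfrow]; exact lt_of_lt_of_le hε (by linarith [hrowA a])) i j
    simp only [Matrix.inv_def, Ring.inverse_eq_inv', Matrix.smul_apply, smul_eq_mul] at this
    exact this
  -- continuity and limit
  have hgc : ContinuousAt g 0 := by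
    apply ContinuousAt.mul
    · exact ContinuousAt.inv₀ ((hfc.matrix_det).continuousAt) (by rw [hf0]; exact hdet0)
    · exact ((hfc.matrix_adjugate).matrix_elem i j).continuousAt
  have htend : Tendsto g (𝓝[>] (0:ℝ)) (𝓝 (A⁻¹ i j)) := by
    rw [← hg0]
    exact hgc.continuousWithinAt.tendsto
  refine ge_of_tendsto htend ?_
  filter_upwards [self_mem_nhdsWithin] with ε hε
  exact hεnonneg ε hε

/-- Behavior under weak synchronization when there is no directed spanning tree
(`k ≥ 2` basic bicomponents): every agent `j` outside the basic bicomponents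
converges to the convex combination `∑ᵢ β_{j,i} yˢᵢ` of the synchronized
trajectories of the basic bicomponents, where `βᵢ = -L₀⁻¹ L₀ᵢ 𝟏` is
nonnegative, sums to one over `i`, and depends only on `L`. -/
theorem stmt_13 {M0 k p : ℕ} (hk : 2 ≤ k) {M : Fin k → ℕ}
    (L0 : Matrix (Fin M0) (Fin M0) ℝ) (hL0 : IsUnit L0.det)
    (L0i : ∀ i : Fin k, Matrix (Fin M0) (Fin (M i)) ℝ)
    (Lblk : ∀ i : Fin k, Matrix (Fin (M i)) (Fin (M i)) ℝ)
    (hLblk : ∀ i, LinearMap.ker (Matrix.toLin' (Lblk i)) =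
      Submodule.span ℝ {(fun _ => 1 : Fin (M i) → ℝ)})
    (L : Matrix (Fin M0 ⊕ (Σ i : Fin k, Fin (M i)))
                (Fin M0 ⊕ (Σ i : Fin k, Fin (M i))) ℝ)
    (hoff : ∀ a b, a ≠ b → L a b ≤ 0)
    (hrowsum : ∀ a, ∑ b, L a b = 0)
    (h11 : ∀ a b, L (Sum.inl a) (Sum.inl b) = L0 a b)
    (h12 : ∀ a i b, L (Sum.inl a) (Sum.inr ⟨i, b⟩) = L0i i a b)
    (h21 : ∀ i a b, L (Sum.inr ⟨i, a⟩) (Sum.inl b) = 0)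
    (h22 : ∀ i a j b, L (Sum.inr ⟨i, a⟩) (Sum.inr ⟨j, b⟩) =
      if h : i = j then Lblk i a (h ▸ b) else 0)
    (y : ℝ≥0 → (Fin M0 ⊕ (Σ i : Fin k, Fin (M i))) → Fin p → ℝ)
    (hweak : ∀ a, Tendsto (fun t => ∑ b, L a b • y t b) atTop (𝓝 0))
    (ys : Fin k → ℝ≥0 → Fin p → ℝ)
    (hys : ∀ i b, Tendsto (fun t => y t (Sum.inr ⟨i, b⟩) - ys i t) atTop (𝓝 0)) :
    (∀ i j, 0 ≤ (-(L0⁻¹ * L0i i)).mulVec (fun _ => 1) j) ∧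
    (∀ j, ∑ i : Fin k, (-(L0⁻¹ * L0i i)).mulVec (fun _ => 1) j = 1) ∧
    (∀ j : Fin M0, Tendsto (fun t => y t (Sum.inl j) -
      ∑ i : Fin k, (-(L0⁻¹ * L0i i)).mulVec (fun _ => 1) j • ys i t)
      atTop (𝓝 0)) := by
  classical
  have hL0off : ∀ a b, a ≠ b → L0 a b ≤ 0 := by
    intro a b hab
    rw [← h11]
    exact hoff _ _ (by simpa using hab)
  have hL0inonpos : ∀ i a b, L0i i a b ≤ 0 := by
    intro i a b
    rw [← h12]
    exact hoff _ _ (by simp)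
  have hkey : ∀ a, ∑ b, L0 a b + ∑ i, ∑ b, L0i i a b = 0 := by
    intro a
    have h := hrowsum (Sum.inl a)
    rw [Fintype.sum_sum_type] at h
    rw [show (∑ x : Σ i : Fin k, Fin (M i), L (Sum.inl a) (Sum.inr x))
        = ∑ i, ∑ b, L0i i a b by
      rw [← Finset.univ_sigma_univ, Finset.sum_sigma]
      exact Finset.sum_congr rfl fun i _ => Finset.sum_congr rfl fun b _ => h12 a i b] at h
    simpa [h11] using h
  have hL0row : ∀ a, 0 ≤ ∑ b, L0 a b := by
    intro a
    have h1 : ∑ i, ∑ b, L0i i a b ≤ 0 :=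
      Finset.sum_nonpos fun i _ => Finset.sum_nonpos fun b _ => hL0inonpos i a b
    linarith [hkey a]
  have hinv : ∀ i j, 0 ≤ L0⁻¹ i j := inv_entry_nonneg L0 hL0 hL0off hL0row
  have hβ : ∀ i j, (-(L0⁻¹ * L0i i)).mulVec (fun _ => 1) j
      = ∑ c, L0⁻¹ j c * (-∑ b, L0i i c b) := by
    intro i j
    simp only [Matrix.mulVec, dotProduct, Matrix.neg_apply, Matrix.mul_apply, mul_one,
      ← Finset.sum_neg_distrib, ← mul_neg]
    rw [Finset.sum_comm]
    refine Finset.sum_congr rfl fun c _ => ?_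
    rw [← Finset.mul_sum, Finset.sum_neg_distrib]
  have hone : ∀ b c, ∑ a, L0⁻¹ b a * L0 a c = (1 : Matrix (Fin M0) (Fin M0) ℝ) b c := by
    intro b c
    rw [← Matrix.mul_apply, Matrix.nonsing_inv_mul L0 hL0]
  have part1 : ∀ i j, 0 ≤ (-(L0⁻¹ * L0i i)).mulVec (fun _ => 1) j := by
    intro i j
    rw [hβ]
    refine Finset.sum_nonneg fun c _ => mul_nonneg (hinv j c) ?_
    rw [neg_nonneg]
    exact Finset.sum_nonpos fun b _ => hL0inonpos i c b
  have part2 : ∀ j, ∑ i : Fin k, (-(L0⁻¹ * L0i i)).mulVec (fun _ => 1) j = 1 := by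
    intro j
    simp only [hβ]
    rw [Finset.sum_comm]
    have h1 : ∀ c, ∑ i, L0⁻¹ j c * (-∑ b, L0i i c b) = L0⁻¹ j c * ∑ b, L0 c b := by
      intro c
      rw [← Finset.mul_sum, Finset.sum_neg_distrib]
      congr 1
      linarith [hkey c]
    simp_rw [h1, Finset.mul_sum]
    rw [Finset.sum_comm]
    have h2 : ∀ b, ∑ c, L0⁻¹ j c * L0 c b = (1 : Matrix (Fin M0) (Fin M0) ℝ) j b := hone j
    simp_rw [h2]
    simp [Matrix.one_apply]
  refine ⟨part1, part2, ?_⟩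
  intro j
  rw [tendsto_pi_nhds]
  intro q
  set E : ℝ≥0 → Fin M0 → ℝ := fun t a =>
    (∑ b, L0 a b * y t (Sum.inl b) q) + ∑ i, (∑ b, L0i i a b) * ys i t q with hE
  have hEt : ∀ a, Tendsto (fun t => E t a) atTop (𝓝 0) := by
    intro a
    have hW : Tendsto (fun t => ∑ b, L (Sum.inl a) b * y t b q) atTop (𝓝 0) := by
      have h := (tendsto_pi_nhds.mp (hweak (Sum.inl a))) q
      simpa [Finset.sum_apply, Pi.smul_apply, smul_eq_mul] using h
    have hD : Tendsto (fun t => ∑ i, ∑ b, L0i i a b * (y t (Sum.inr ⟨i, b⟩) q - ys i t q))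
        atTop (𝓝 0) := by
      have h0 : (0:ℝ) = ∑ i : Fin k, ∑ b : Fin (M i), L0i i a b * 0 := by simp
      rw [h0]
      refine tendsto_finset_sum _ fun i _ => tendsto_finset_sum _ fun b _ => ?_
      have h := (tendsto_pi_nhds.mp (hys i b)) q
      simp only [Pi.sub_apply, Pi.zero_apply] at h
      exact h.const_mul _
    have hid : ∀ t, ∑ b, L (Sum.inl a) b * y t b q = E t a
        + ∑ i, ∑ b, L0i i a b * (y t (Sum.inr ⟨i, b⟩) q - ys i t q) := by
      intro t
      rw [Fintype.sum_sum_type]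
      rw [show (∑ x : Σ i : Fin k, Fin (M i), L (Sum.inl a) (Sum.inr x) * y t (Sum.inr x) q)
          = ∑ i, ∑ b, L0i i a b * y t (Sum.inr ⟨i, b⟩) q by
        rw [← Finset.univ_sigma_univ, Finset.sum_sigma]
        exact Finset.sum_congr rfl fun i _ => Finset.sum_congr rfl fun b _ => by rw [h12]]
      simp only [hE, h11, mul_sub, Finset.sum_sub_distrib, Finset.sum_mul]
      ring
    have h := hW.congr hid
    rw [show (0:ℝ) = 0 + 0 by ring] at h ⊢
    have := h.sub hD
    simpa using this
  have hmain : ∀ t, (y t (Sum.inl j) - ∑ i : Fin k,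
      (-(L0⁻¹ * L0i i)).mulVec (fun _ => 1) j • ys i t) q
      = ∑ a, L0⁻¹ j a * E t a := by
    intro t
    have hA : ∑ a, L0⁻¹ j a * ∑ b, L0 a b * y t (Sum.inl b) q = y t (Sum.inl j) q := by
      simp_rw [Finset.mul_sum, ← mul_assoc]
      rw [Finset.sum_comm]
      simp_rw [← Finset.sum_mul, hone j]
      simp [Matrix.one_apply]
    have hB : ∑ a, L0⁻¹ j a * ∑ i, (∑ b, L0i i a b) * ys i t q
        = ∑ i : Fin k, (∑ c, L0⁻¹ j c * ∑ b, L0i i c b) * ys i t q := by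
      calc ∑ a, L0⁻¹ j a * ∑ i, (∑ b, L0i i a b) * ys i t q
          = ∑ a, ∑ i, (L0⁻¹ j a * ∑ b, L0i i a b) * ys i t q := by
            refine Finset.sum_congr rfl fun a _ => ?_
            rw [Finset.mul_sum]
            exact Finset.sum_congr rfl fun i _ => by ring
        _ = ∑ i, ∑ a, (L0⁻¹ j a * ∑ b, L0i i a b) * ys i t q := Finset.sum_comm
        _ = ∑ i : Fin k, (∑ c, L0⁻¹ j c * ∑ b, L0i i c b) * ys i t q := by
            exact Finset.sum_congr rfl fun i _ => by rw [Finset.sum_mul]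
    simp only [hE, mul_add, Finset.sum_add_distrib, hA, hB]
    simp only [Pi.sub_apply, Finset.sum_apply, Pi.smul_apply, smul_eq_mul, hβ]
    rw [sub_eq_add_neg]
    congr 1
    rw [← Finset.sum_neg_distrib]
    refine Finset.sum_congr rfl fun i _ => ?_
    rw [← neg_mul]
    congr 1
    rw [← Finset.sum_neg_distrib]
    exact Finset.sum_congr rfl fun c _ => by rw [mul_neg, neg_neg]
  have h := tendsto_finset_sum (Finset.univ : Finset (Fin M0))
    (fun a _ => ((hEt a).const_mul (L0⁻¹ j a)))
  simp only [mul_zero, Finset.sum_const_zero] at h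
  exact h.congr fun t => (hmain t).symm
end

section
/- Let L be the Laplacian of a strongly connected weighted directed graph on M nodes (so ker L = span{𝟏_M}). If y : ℝ≥0 → (ℝ^p)^M satisfies (L ⊗ I_p)y(t) → 0 as t → ∞, then y_a(t) - y_b(t) → 0 for all nodes a, b. -/
open Filter Matrix
open scoped NNReal Topology

/-- For the Laplacian of a strongly connected weighted digraph (so that
`ker L = span{𝟏}`), weak synchronization `(L ⊗ I_p) y(t) → 0` implies pairwise
output synchronization. -/
theorem stmt_14 {Mn p : ℕ} (L : Matrix (Fin Mn) (Fin Mn) ℝ)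
    (hoff : ∀ i j, i ≠ j → L i j ≤ 0)
    (hrow : ∀ i, ∑ j, L i j = 0)
    (hker : LinearMap.ker (Matrix.toLin' L) =
      Submodule.span ℝ {(fun _ => 1 : Fin Mn → ℝ)})
    (y : ℝ≥0 → Fin Mn → Fin p → ℝ)
    (hweak : ∀ i, Tendsto (fun t => ∑ j, L i j • y t j) atTop (𝓝 0)) :
    ∀ a b, Tendsto (fun t => y t a - y t b) atTop (𝓝 0) := by
  intro a b
  set T := Matrix.toLin' L with hT
  set g : (Fin Mn → ℝ) →ₗ[ℝ] ℝ :=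
    { toFun := fun x => x a - x b,
      map_add' := by intro x y; simp; ring,
      map_smul' := by intro c x; simp; ring } with hg
  have hle : LinearMap.ker T ≤ LinearMap.ker g := by
    rw [hT, hker, Submodule.span_le]
    intro x hx
    simp only [Set.mem_singleton_iff] at hx
    subst hx
    simp [LinearMap.mem_ker, hg]
  set Tbar := (LinearMap.ker T).liftQ T le_rfl with hTbar
  have hinj : LinearMap.ker Tbar = ⊥ := Submodule.ker_liftQ_eq_bot _ _ _ le_rfl
  obtain ⟨S, hS⟩ := Tbar.exists_leftInverse_of_injective hinj
  set h := ((LinearMap.ker T).liftQ g hle).comp S with hh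
  have hfact : ∀ x, h (T x) = g x := by
    intro x
    have h1 : T x = Tbar ((LinearMap.ker T).mkQ x) := rfl
    have h2 := LinearMap.congr_fun hS ((LinearMap.ker T).mkQ x)
    simp only [LinearMap.comp_apply, LinearMap.id_apply] at h2
    rw [hh, LinearMap.comp_apply, h1, h2]
    rfl
  have hcont : Continuous h := h.continuous_of_finiteDimensional
  rw [tendsto_pi_nhds]
  intro k
  have hw : Tendsto (fun t => T (fun i => y t i k)) atTop (𝓝 0) := by
    rw [tendsto_pi_nhds]
    intro i
    have h0 : Tendsto (fun t => (∑ j, L i j • y t j) k) atTop (𝓝 ((0 : Fin p → ℝ) k)) :=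
      ((continuous_apply k).tendsto 0).comp (hweak i)
    have heq : ∀ t, (∑ j, L i j • y t j) k = T (fun i => y t i k) i := by
      intro t
      simp [hT, Matrix.toLin'_apply, Matrix.mulVec, dotProduct, Finset.sum_apply]
    simpa [heq] using h0
  have := (hcont.tendsto 0).comp hw
  simp only [map_zero] at this
  have hfin : ∀ t, h (T (fun i => y t i k)) = y t a k - y t b k := by
    intro t; rw [hfact]; rfl
  have h3 : Tendsto (fun t => y t a k - y t b k) atTop (𝓝 0) := by
    refine this.congr fun t => ?_
    simp only [Function.comp_apply]
    exact hfin t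
  simpa using h3
end

section
/- Suppose a graph on N nodes has k ≥ 2 basic bicomponents and a family of output trajectories achieving weak synchronization with the property that initial conditions of agents in distinct basic bicomponents can be scaled independently and the outputs depend linearly on initial conditions. If for some initial condition the synchronized trajectory y_ss of one basic bicomponent does not converge to zero, then output synchronization of the full network fails for some initial condition. -/
open Filter
open scoped NNReal Topology

/-- If, in a linear MAS with `k ≥ 2` basic bicomponents, the initial condition
of one basic bicomponent can be scaled independently (scaling its synchronized
trajectory `yss` while leaving the output of an agent `j` of another basic
bicomponent unchanged) and `yss ↛ 0`, then output synchronization fails for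
some initial condition.  Here `Y x₀ t i` is the output of agent `i` at time `t`
from initial condition `x₀`. -/
theorem stmt_15 {n N p : ℕ}
    (Y : (Fin n → ℝ) → ℝ≥0 → Fin N → Fin p → ℝ)
    (a j : Fin N) (haj : a ≠ j)
    (scale : ℝ → (Fin n → ℝ))
    (yss : ℝ≥0 → Fin p → ℝ)
    (hsync : ∀ c : ℝ, Tendsto (fun t => Y (scale c) t a - c • yss t) atTop (𝓝 0))
    (hunchanged : ∀ c : ℝ, ∀ t, Y (scale c) t j = Y (scale 1) t j)
    (hss : ¬ Tendsto yss atTop (𝓝 0)) :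
    ¬ (∀ x₀ : Fin n → ℝ, ∀ i i' : Fin N,
        Tendsto (fun t => Y x₀ t i - Y x₀ t i') atTop (𝓝 0)) := by
  intro hall
  apply hss
  have h1 := (hall (scale 1) a j).sub (hsync 1)
  have h2 := (hall (scale 2) a j).sub (hsync 2)
  have key := h2.sub h1
  have heq : (fun t => (Y (scale 2) t a - Y (scale 2) t j - (Y (scale 2) t a - (2:ℝ) • yss t)) - (Y (scale 1) t a - Y (scale 1) t j - (Y (scale 1) t a - (1:ℝ) • yss t))) = yss := by
    funext t i
    have h := hunchanged 2 t
    simp only [Pi.sub_apply, Pi.smul_apply, h, smul_eq_mul]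
    ring
  rw [heq] at key
  simpa using key
end
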